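/- Let A be a real symmetric (n+1)×(n+1) matrix satisfying A·𝟏 = 0 and A·x = e_R − e_L, where 𝟏 is the all-ones vector, x = (0, h, 2h, …, nh)ᵀ with h = 1/n, e_L = (1,0,…,0)ᵀ, e_R = (0,…,0,1)ᵀ. Write A in block form with central (n−1)×(n−1) block Ā (rows/columns 1..n−1). Then rank(A) = rank(Ā) + 1. -/

import Mathlib

open Matrix

noncomputable section

def onesVec (n : ℕ) : Fin (n+1) → ℝ := fun _ => 1

def gridVec (n : ℕ) : Fin (n+1) → ℝ := fun i => (i : ℝ) / n

def eL (n : ℕ) : Fin (n+1) → ℝ := fun i => if i.1 = 0 then 1 else 0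

def eR (n : ℕ) : Fin (n+1) → ℝ := fun i => if i.1 = n then 1 else 0

def interiorEmb (n : ℕ) : Fin (n-1) → Fin (n+1) :=
  fun i => ⟨i.1 + 1, by have := i.isLt; omega⟩

def centralBlock (n : ℕ) (A : Matrix (Fin (n+1)) (Fin (n+1)) ℝ) :
    Matrix (Fin (n-1)) (Fin (n-1)) ℝ :=
  A.submatrix (interiorEmb n) (interiorEmb n)

def pad (n : ℕ) (B : Matrix (Fin (n-1)) (Fin (n-1)) ℝ) :
    Matrix (Fin (n+1)) (Fin (n+1)) ℝ :=
  fun i j =>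
    if hi : 0 < i.1 ∧ i.1 < n then
      if hj : 0 < j.1 ∧ j.1 < n then
        B ⟨i.1 - 1, by omega⟩ ⟨j.1 - 1, by omega⟩
      else 0
    else 0

def G2 (n : ℕ) (A : Matrix (Fin (n+1)) (Fin (n+1)) ℝ) :
    Matrix (Fin (n+1)) (Fin (n+1)) ℝ :=
  pad n (centralBlock n A)⁻¹

def Aplus (n : ℕ) (A : Matrix (Fin (n+1)) (Fin (n+1)) ℝ) :
    Matrix (Fin (n+1)) (Fin (n+1)) ℝ :=
  (1 - ((n : ℝ) + 1)⁻¹ • vecMulVec (onesVec n) (onesVec n)) * G2 n A *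
      (1 - ((n : ℝ) + 1)⁻¹ • vecMulVec (onesVec n) (onesVec n)) +
    vecMulVec (gridVec n - (1/2 : ℝ) • onesVec n)
      (gridVec n - (1/2 : ℝ) • onesVec n)


set_option linter.unusedSectionVars false
set_option maxHeartbeats 1000000

section auxHelpers
variable {m : Type*} [Fintype m] [DecidableEq m]

lemma mul_vecMulVec' (M : Matrix m m ℝ) (u v : m → ℝ) :
    M * vecMulVec u v = vecMulVec (M *ᵥ u) v := by
  ext i j
  simp [Matrix.mul_apply, vecMulVec_apply, mulVec, dotProduct, Finset.sum_mul, mul_assoc]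

lemma vecMulVec_mul' (u v : m → ℝ) (M : Matrix m m ℝ) :
    vecMulVec u v * M = vecMulVec u (Mᵀ *ᵥ v) := by
  ext i j
  simp [Matrix.mul_apply, vecMulVec_apply, mulVec, dotProduct, Finset.mul_sum, mul_assoc,
    mul_comm, mul_left_comm]

lemma vecMulVec_mul_vecMulVec' (u v w z : m → ℝ) :
    vecMulVec u v * vecMulVec w z = (v ⬝ᵥ w) • vecMulVec u z := by
  ext i j
  simp [Matrix.mul_apply, vecMulVec_apply, dotProduct, Finset.sum_mul, Finset.mul_sum]
  exact Finset.sum_congr rfl fun k _ => by ring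

lemma vecMulVec_transpose' (u v : m → ℝ) : (vecMulVec u v)ᵀ = vecMulVec v u := by
  ext i j; simp [vecMulVec_apply, mul_comm]

end auxHelpers

lemma range_prodMap' {R M N P Q : Type*} [CommRing R] [AddCommGroup M] [AddCommGroup N]
    [AddCommGroup P] [AddCommGroup Q] [Module R M] [Module R N] [Module R P] [Module R Q]
    (f : M →ₗ[R] P) (g : N →ₗ[R] Q) :
    LinearMap.range (f.prodMap g) = (LinearMap.range f).prod (LinearMap.range g) := by
  ext ⟨a, b⟩
  simp only [LinearMap.mem_range, LinearMap.prodMap_apply, Submodule.mem_prod, Prod.mk.injEq,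
    Prod.exists]
  constructor
  · rintro ⟨x, y, hx, hy⟩; exact ⟨⟨x, hx⟩, ⟨y, hy⟩⟩
  · rintro ⟨⟨x, hx⟩, ⟨y, hy⟩⟩; exact ⟨x, y, hx, hy⟩

/-- the equiv between a product submodule and the product of submodules -/
def submoduleProdEquiv {R M N : Type*} [CommRing R] [AddCommGroup M] [AddCommGroup N]
    [Module R M] [Module R N] (p : Submodule R M) (q : Submodule R N) :
    (p.prod q) ≃ₗ[R] p × q where
  toFun x := (⟨x.1.1, x.2.1⟩, ⟨x.1.2, x.2.2⟩)
  invFun x := ⟨(x.1.1, x.2.1), ⟨x.1.2, x.2.2⟩⟩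
  map_add' x y := rfl
  map_smul' c x := rfl
  left_inv x := rfl
  right_inv x := rfl

lemma finrank_prod_submodule {R M N : Type*} [Field R] [AddCommGroup M] [AddCommGroup N]
    [Module R M] [Module R N] (p : Submodule R M) (q : Submodule R N)
    [Module.Finite R p] [Module.Finite R q] :
    Module.finrank R (p.prod q) = Module.finrank R p + Module.finrank R q := by
  rw [(submoduleProdEquiv p q).finrank_eq, Module.finrank_prod]

lemma rank_fromBlocks_diag {p q : Type*} [Fintype p] [Fintype q] [DecidableEq p] [DecidableEq q]
    (B : Matrix p p ℝ) (C : Matrix q q ℝ) :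
    (fromBlocks B 0 0 C).rank = B.rank + C.rank := by
  classical
  let e := LinearEquiv.sumArrowLequivProdArrow p q ℝ ℝ
  have key : (fromBlocks B (0 : Matrix p q ℝ) (0 : Matrix q p ℝ) C).mulVecLin
      = (e.symm : ((p → ℝ) × (q → ℝ)) →ₗ[ℝ] (p ⊕ q → ℝ)) ∘ₗ
        ((B.mulVecLin).prodMap (C.mulVecLin)) ∘ₗ (e : (p ⊕ q → ℝ) →ₗ[ℝ] ((p → ℝ) × (q → ℝ))) := by
    apply LinearMap.ext
    intro x
    simp only [mulVecLin_apply, LinearMap.coe_comp, Function.comp_apply, LinearEquiv.coe_coe,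
      LinearMap.prodMap_apply, mulVecLin_apply]
    rw [fromBlocks_mulVec]
    simp only [Matrix.zero_mulVec, add_zero, zero_add]
    rfl
  rw [Matrix.rank, key, LinearMap.range_comp, LinearMap.range_comp_of_range_eq_top _ e.range,
    range_prodMap']
  rw [LinearEquiv.finrank_map_eq]
  rw [finrank_prod_submodule]
  rfl

lemma rank_diag_two : (diagonal ![(1:ℝ), 0]).rank = 1 := by
  rw [rank_diagonal]
  rw [Fintype.card_eq_one_iff]
  refine ⟨⟨0, by norm_num⟩, ?_⟩
  rintro ⟨i, hi⟩
  fin_cases i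
  · rfl
  · simp at hi

lemma pad_interior (n : ℕ) (B : Matrix (Fin (n-1)) (Fin (n-1)) ℝ) (i j : Fin (n-1)) :
    pad n B (interiorEmb n i) (interiorEmb n j) = B i j := by
  have hi := i.isLt
  have hj := j.isLt
  unfold pad interiorEmb
  rw [dif_pos (by simp; omega), dif_pos (by simp; omega)]
  congr 1 <;> exact Fin.ext (by simp)

lemma pad_border_left (n : ℕ) (B : Matrix (Fin (n-1)) (Fin (n-1)) ℝ) (i j : Fin (n+1))
    (h : ¬ (0 < i.1 ∧ i.1 < n)) : pad n B i j = 0 := by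
  unfold pad; rw [dif_neg h]

lemma pad_border_right (n : ℕ) (B : Matrix (Fin (n-1)) (Fin (n-1)) ℝ) (i j : Fin (n+1))
    (h : ¬ (0 < j.1 ∧ j.1 < n)) : pad n B i j = 0 := by
  unfold pad
  split_ifs <;> tauto

def borderEquiv (n : ℕ) (hn : 2 ≤ n) : (Fin (n-1) ⊕ Fin 2) ≃ Fin (n+1) where
  toFun := Sum.elim (interiorEmb n) ![⟨0, by omega⟩, Fin.last n]
  invFun j :=
    if h0 : j.1 = 0 then .inr 0
    else if hj : j.1 = n then .inr 1
    else .inl ⟨j.1 - 1, by have := j.isLt; omega⟩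
  left_inv x := by
    rcases x with i | k
    · have hi := i.isLt
      dsimp only [Sum.elim_inl, interiorEmb]
      rw [dif_neg (by omega), dif_neg (by omega)]
      simp
    · fin_cases k
      · simp
      · dsimp only [Sum.elim_inr]
        simp only [Fin.mk_one, Fin.isValue]
        have h1 : ((![(⟨0, by omega⟩ : Fin (n+1)), Fin.last n]) (1 : Fin 2) : ℕ) = n := rfl
        split_ifs with ha
        · omega
        · rfl
  right_inv j := by
    dsimp only
    by_cases h0 : j.1 = 0
    · rw [dif_pos h0]
      dsimp only [Sum.elim_inr]
      exact Fin.ext (by simpa using h0.symm)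
    · by_cases hj : j.1 = n
      · rw [dif_neg h0, dif_pos hj]
        dsimp only [Sum.elim_inr]
        have h1 : (![(⟨0, by omega⟩ : Fin (n+1)), Fin.last n]) (1 : Fin 2) = Fin.last n := rfl
        rw [h1]
        exact Fin.ext (by simp [Fin.val_last, hj])
      · rw [dif_neg h0, dif_neg hj]
        dsimp only [Sum.elim_inl, interiorEmb]
        exact Fin.ext (by have := j.isLt; simp; omega)

lemma reindexM (n : ℕ) (hn : 2 ≤ n) (B : Matrix (Fin (n-1)) (Fin (n-1)) ℝ) :
    (pad n B + vecMulVec (eL n) (eL n)).submatrix (borderEquiv n hn) (borderEquiv n hn)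
      = fromBlocks B 0 0 (diagonal ![(1:ℝ), 0]) := by
  ext i j
  have hval : ∀ k : Fin 2, ((borderEquiv n hn (Sum.inr k)) : ℕ) = if k = 0 then 0 else n := by
    intro k
    fin_cases k <;> rfl
  rcases i with i | k <;> rcases j with j | l
  · simp only [submatrix_apply, fromBlocks_apply₁₁]
    have : borderEquiv n hn (Sum.inl i) = interiorEmb n i := rfl
    rw [this]
    have : borderEquiv n hn (Sum.inl j) = interiorEmb n j := rfl
    rw [this]
    rw [Matrix.add_apply, pad_interior, vecMulVec_apply]
    have : eL n (interiorEmb n i) = 0 := by simp [eL, interiorEmb]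
    rw [this]; ring
  · simp only [submatrix_apply, fromBlocks_apply₁₂, Matrix.zero_apply]
    have h1 : borderEquiv n hn (Sum.inl i) = interiorEmb n i := rfl
    rw [h1, Matrix.add_apply, pad_border_right, vecMulVec_apply]
    · have : eL n (interiorEmb n i) = 0 := by simp [eL, interiorEmb]
      rw [this]; ring
    · rw [hval]; split_ifs <;> omega
  · simp only [submatrix_apply, fromBlocks_apply₂₁, Matrix.zero_apply]
    rw [Matrix.add_apply, pad_border_left, vecMulVec_apply]
    · have h1 : borderEquiv n hn (Sum.inl j) = interiorEmb n j := rfl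
      have : eL n (borderEquiv n hn (Sum.inl j)) = 0 := by rw [h1]; simp [eL, interiorEmb]
      rw [h1] at this ⊢
      rw [this]; ring
    · rw [hval]; split_ifs <;> omega
  · simp only [submatrix_apply, fromBlocks_apply₂₂]
    rw [Matrix.add_apply, pad_border_left, vecMulVec_apply]
    · have hek : ∀ k : Fin 2, eL n (borderEquiv n hn (Sum.inr k)) = if k = 0 then 1 else 0 := by
        intro k
        simp only [eL, hval]
        split_ifs <;> first | rfl | omega
      rw [hek, hek]
      fin_cases k <;> fin_cases l <;> simp [diagonal]
    · rw [hval]; split_ifs <;> omega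

lemma pad_central_apply (n : ℕ) (A : Matrix (Fin (n+1)) (Fin (n+1)) ℝ) (i j : Fin (n+1))
    (hi : 0 < i.1 ∧ i.1 < n) (hj : 0 < j.1 ∧ j.1 < n) :
    pad n (centralBlock n A) i j = A i j := by
  unfold pad centralBlock interiorEmb
  rw [dif_pos hi, dif_pos hj]
  simp only [submatrix_apply]
  congr 1 <;> exact Fin.ext (by simp; omega)

lemma keyIdentity (n : ℕ) (hn : 2 ≤ n) (A : Matrix (Fin (n+1)) (Fin (n+1)) ℝ)
    (hsym : A.IsSymm) :
    A + (vecMulVec ((eL n - eR n) - A 0) (eL n)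
        + vecMulVec (-(eL n - eR n) - A (Fin.last n)) (eR n))
      + (vecMulVec (eL n) ((eL n - eR n) - A 0)
        + vecMulVec (eR n) (-(eL n - eR n) - A (Fin.last n)))
      + ((A 0 0 - 1) • vecMulVec (eL n) (eL n)
        + (1 + A (Fin.last n) 0) • vecMulVec (eL n) (eR n)
        + (1 + A 0 (Fin.last n)) • vecMulVec (eR n) (eL n)
        + (A (Fin.last n) (Fin.last n) - 1) • vecMulVec (eR n) (eR n))
    = pad n (centralBlock n A) + vecMulVec (eL n - eR n) (eL n - eR n) := by
  have hs := fun a b => hsym.apply a b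
  have hne : ¬ (0:ℕ) = n := by omega
  have hnz : ¬ n = 0 := by omega
  ext i j
  have hi := i.isLt
  have hj := j.isLt
  have h0v : ((0 : Fin (n+1)) : ℕ) = 0 := rfl
  have hlv : ((Fin.last n : Fin (n+1)) : ℕ) = n := rfl
  simp only [Matrix.add_apply, vecMulVec_apply, Pi.sub_apply, Pi.neg_apply, Matrix.smul_apply, smul_eq_mul,
    eL, eR]
  by_cases hi0 : i.1 = 0 <;> by_cases hin : i.1 = n <;>
    by_cases hj0 : j.1 = 0 <;> by_cases hjn : j.1 = n
  all_goals try omega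
  all_goals (try have hieq : i = (0 : Fin (n+1)) := Fin.ext (by omega))
  all_goals (try have hieq' : i = Fin.last n := Fin.ext (by rw [hlv]; omega))
  all_goals (try have hjeq : j = (0 : Fin (n+1)) := Fin.ext (by omega))
  all_goals (try have hjeq' : j = Fin.last n := Fin.ext (by rw [hlv]; omega))
  · subst hieq; subst hjeq
    rw [pad_border_left _ _ _ _ (by omega)]
    simp [h0v, hlv, hne, hnz]
    ring
  · subst hieq; subst hjeq'
    rw [pad_border_left _ _ _ _ (by omega)]
    simp [h0v, hlv, hne, hnz]
    ring
  · subst hieq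
    rw [pad_border_left _ _ _ _ (by omega)]
    simp [h0v, hlv, hne, hnz, hj0, hjn]
  · subst hieq'; subst hjeq
    rw [pad_border_left _ _ _ _ (by omega)]
    simp [h0v, hlv, hne, hnz]
    ring
  · subst hieq'; subst hjeq'
    rw [pad_border_left _ _ _ _ (by omega)]
    simp [h0v, hlv, hne, hnz]
    ring
  · subst hieq'
    rw [pad_border_left _ _ _ _ (by omega)]
    simp [h0v, hlv, hne, hnz, hj0, hjn]
  · subst hjeq
    rw [pad_border_right _ _ _ _ (by omega)]
    simp [h0v, hlv, hne, hnz, hi0, hin]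
    linarith [hs 0 i]
  · subst hjeq'
    rw [pad_border_right _ _ _ _ (by omega)]
    simp [h0v, hlv, hne, hnz, hi0, hin]
    linarith [hs (Fin.last n) i]
  · rw [pad_central_apply _ _ _ _ (by omega) (by omega)]
    simp [hi0, hin, hj0, hjn, hne, hnz]

theorem rank_A_eq_rank_central_add_one
    (n : ℕ) (hn : 2 ≤ n) (A : Matrix (Fin (n+1)) (Fin (n+1)) ℝ)
    (hsym : A.IsSymm)
    (h1 : A *ᵥ onesVec n = 0)
    (hx : A *ᵥ gridVec n = eR n - eL n) :
    A.rank = (centralBlock n A).rank + 1 := by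
  classical
  have hAT : Aᵀ = A := hsym
  have hs := fun a b => hsym.apply a b
  have hne : ¬ (0:ℕ) = n := by omega
  have hnz : ¬ n = 0 := by omega
  have hnR : (n : ℝ) ≠ 0 := by exact_mod_cast hnz
  have heL : eL n = Pi.single (0 : Fin (n+1)) 1 := by
    ext i; simp only [eL, Pi.single_apply, Fin.ext_iff, Fin.val_zero]
  have heR : eR n = Pi.single (Fin.last n) 1 := by
    ext i; simp [eR, Pi.single_apply, Fin.ext_iff, Fin.val_last]
  have hvA : ∀ v, v ᵥ* A = A *ᵥ v := by
    intro v
    have := vecMul_transpose A v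
    rwa [hAT] at this
  -- the interior versions of 1 - x and x
  set yt : Fin (n+1) → ℝ := onesVec n - gridVec n - eL n with hyt
  set xt : Fin (n+1) → ℝ := gridVec n - eR n with hxt
  have hyt0 : yt 0 = 0 := by simp [hyt, onesVec, gridVec, eL]
  have hytl : yt (Fin.last n) = 0 := by
    simp [hyt, onesVec, gridVec, eL, Fin.val_last, hnz, div_self hnR]
  have hxt0 : xt 0 = 0 := by simp [hxt, gridVec, eR, hne]
  have hxtl : xt (Fin.last n) = 0 := by
    simp [hxt, gridVec, eR, Fin.val_last, div_self hnR]
  have hdL : ∀ v : Fin (n+1) → ℝ, v ⬝ᵥ eL n = v 0 := by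
    intro v; rw [heL, dotProduct_single, mul_one]
  have hdR : ∀ v : Fin (n+1) → ℝ, v ⬝ᵥ eR n = v (Fin.last n) := by
    intro v; rw [heR, dotProduct_single, mul_one]
  have hdL' : ∀ v : Fin (n+1) → ℝ, eL n ⬝ᵥ v = v 0 := by
    intro v; rw [heL, single_dotProduct, one_mul]
  have hAeL : A *ᵥ eL n = A 0 := by rw [heL, mulVec_single_one]; ext i; exact hs 0 i
  have hAeR : A *ᵥ eR n = A (Fin.last n) := by rw [heR, mulVec_single_one]; ext i; exact hs (Fin.last n) i
  have hAyt : A *ᵥ yt = (eL n - eR n) - A 0 := by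
    rw [hyt, mulVec_sub, mulVec_sub, h1, hx, hAeL]
    abel
  have hAxt : A *ᵥ xt = -(eL n - eR n) - A (Fin.last n) := by
    rw [hxt, mulVec_sub, hx, hAeR]
    abel
  set L : Matrix (Fin (n+1)) (Fin (n+1)) ℝ := vecMulVec (eL n) yt + vecMulVec (eR n) xt with hL
  set T : Matrix (Fin (n+1)) (Fin (n+1)) ℝ := vecMulVec yt (eL n) + vecMulVec xt (eR n) with hT
  have hLT : (1 + L)ᵀ = 1 + T := by
    rw [transpose_add, transpose_one, hL, transpose_add, vecMulVec_transpose',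
      vecMulVec_transpose', hT]
  have hLL : L * L = 0 := by
    rw [hL, add_mul, mul_add, mul_add, vecMulVec_mul_vecMulVec', vecMulVec_mul_vecMulVec',
      vecMulVec_mul_vecMulVec', vecMulVec_mul_vecMulVec', hdL, hdL, hdR, hdR, hyt0, hytl,
      hxt0, hxtl]
    simp
  have hEinvL : (1 - L) * (1 + L) = 1 := by
    have : (1 - L) * (1 + L) = 1 - L * L := by noncomm_ring
    rw [this, hLL, sub_zero]
  have hEinvR : (1 + L) * (1 - L) = 1 := by
    have : (1 + L) * (1 - L) = 1 - L * L := by noncomm_ring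
    rw [this, hLL, sub_zero]
  have hdetE : IsUnit (1 + L).det := Matrix.isUnit_det_of_left_inverse hEinvL
  have hdetET : IsUnit ((1 + L)ᵀ).det := by rw [Matrix.det_transpose]; exact hdetE
  -- the scalar coefficients
  have e1 : yt ⬝ᵥ A 0 = 1 - A 0 0 := by
    rw [show A 0 = A *ᵥ eL n from hAeL.symm, dotProduct_mulVec, hvA, hAyt, hdL]
    simp [eL, eR, hne, hAeL]
  have e2 : yt ⬝ᵥ A (Fin.last n) = -1 - A 0 (Fin.last n) := by
    rw [show A (Fin.last n) = A *ᵥ eR n from hAeR.symm, dotProduct_mulVec, hvA, hAyt, hdR]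
    simp [eL, eR, hne, Fin.val_last, hnz, hAeR]
  have e3 : xt ⬝ᵥ A 0 = -1 - A (Fin.last n) 0 := by
    rw [show A 0 = A *ᵥ eL n from hAeL.symm, dotProduct_mulVec, hvA, hAxt, hdL]
    simp [eL, eR, hne, Pi.neg_apply, hAeL]
  have e4 : xt ⬝ᵥ A (Fin.last n) = 1 - A (Fin.last n) (Fin.last n) := by
    rw [show A (Fin.last n) = A *ᵥ eR n from hAeR.symm, dotProduct_mulVec, hvA, hAxt, hdR]
    simp [eL, eR, hne, Fin.val_last, hnz, Pi.neg_apply, hAeR]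
  have sc1 : yt ⬝ᵥ ((eL n - eR n) - A 0) = A 0 0 - 1 := by
    rw [dotProduct_sub, dotProduct_sub, hdL, hdR, hyt0, hytl, e1]
    ring
  have sc2 : yt ⬝ᵥ (-(eL n - eR n) - A (Fin.last n)) = 1 + A (Fin.last n) 0 := by
    rw [dotProduct_sub, dotProduct_neg, dotProduct_sub, hdL, hdR, hyt0, hytl, e2]
    linarith [hs 0 (Fin.last n)]
  have sc3 : xt ⬝ᵥ ((eL n - eR n) - A 0) = 1 + A 0 (Fin.last n) := by
    rw [dotProduct_sub, dotProduct_sub, hdL, hdR, hxt0, hxtl, e3]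
    linarith [hs (Fin.last n) 0]
  have sc4 : xt ⬝ᵥ (-(eL n - eR n) - A (Fin.last n)) = A (Fin.last n) (Fin.last n) - 1 := by
    rw [dotProduct_sub, dotProduct_neg, dotProduct_sub, hdL, hdR, hxt0, hxtl, e4]
    ring
  -- step 1 : congruence by 1 + L
  have hAT' : A * T = vecMulVec ((eL n - eR n) - A 0) (eL n)
      + vecMulVec (-(eL n - eR n) - A (Fin.last n)) (eR n) := by
    rw [hT, mul_add, mul_vecMulVec', mul_vecMulVec', hAyt, hAxt]
  have hLA : L * A = vecMulVec (eL n) ((eL n - eR n) - A 0)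
      + vecMulVec (eR n) (-(eL n - eR n) - A (Fin.last n)) := by
    rw [hL, add_mul, vecMulVec_mul', vecMulVec_mul', hAT, hAyt, hAxt]
  have hLAT : L * (vecMulVec ((eL n - eR n) - A 0) (eL n)
      + vecMulVec (-(eL n - eR n) - A (Fin.last n)) (eR n))
      = (A 0 0 - 1) • vecMulVec (eL n) (eL n)
        + (1 + A (Fin.last n) 0) • vecMulVec (eL n) (eR n)
        + (1 + A 0 (Fin.last n)) • vecMulVec (eR n) (eL n)
        + (A (Fin.last n) (Fin.last n) - 1) • vecMulVec (eR n) (eR n) := by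
    rw [hL, add_mul, mul_add, mul_add, vecMulVec_mul_vecMulVec', vecMulVec_mul_vecMulVec',
      vecMulVec_mul_vecMulVec', vecMulVec_mul_vecMulVec', sc1, sc2, sc3, sc4]
    abel
  have expand : (1 + L) * A * (1 + T) = A + A * T + L * A + L * (A * T) := by
    noncomm_ring
  have step1 : (1 + L) * A * (1 + L)ᵀ
      = pad n (centralBlock n A) + vecMulVec (eL n - eR n) (eL n - eR n) := by
    rw [hLT, expand, hAT', hLA, hLAT]
    exact keyIdentity n hn A hsym
  -- step 2 : congruence by 1 + vecMulVec eR eL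
  set V : Matrix (Fin (n+1)) (Fin (n+1)) ℝ := vecMulVec (eR n) (eL n) with hV
  set W : Matrix (Fin (n+1)) (Fin (n+1)) ℝ := vecMulVec (eL n) (eR n) with hW
  set M : Matrix (Fin (n+1)) (Fin (n+1)) ℝ :=
    pad n (centralBlock n A) + vecMulVec (eL n - eR n) (eL n - eR n) with hM
  have hVT : (1 + V)ᵀ = 1 + W := by
    rw [transpose_add, transpose_one, hV, vecMulVec_transpose', hW]
  have hVV : V * V = 0 := by
    rw [hV, vecMulVec_mul_vecMulVec', hdR]
    simp [eL, Fin.val_last, hnz]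
  have hV2invL : (1 - V) * (1 + V) = 1 := by
    have : (1 - V) * (1 + V) = 1 - V * V := by noncomm_ring
    rw [this, hVV, sub_zero]
  have hdetV : IsUnit (1 + V).det := Matrix.isUnit_det_of_left_inverse hV2invL
  have hdetVT : IsUnit ((1 + V)ᵀ).det := by rw [Matrix.det_transpose]; exact hdetV
  have hMeL : M *ᵥ eL n = eL n - eR n := by
    rw [hM, Matrix.add_mulVec, heL, mulVec_single_one, mulVec_single_one]
    ext i
    simp only [transpose_apply, Matrix.col_apply, Pi.add_apply, vecMulVec_apply, Pi.sub_apply]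
    rw [pad_border_right _ _ _ _ (by simp)]
    simp [eL, eR, hne, Pi.single_apply]
  have hMTeL : Mᵀ *ᵥ eL n = eL n - eR n := by
    rw [heL, mulVec_single_one]
    ext i
    show M 0 i = _
    rw [hM]
    simp only [Pi.add_apply, Matrix.add_apply, vecMulVec_apply, Pi.sub_apply]
    rw [pad_border_left _ _ _ _ (by simp)]
    simp [eL, eR, hne, Pi.single_apply]
  have hMW : M * W = vecMulVec (eL n - eR n) (eR n) := by
    rw [hW, mul_vecMulVec', hMeL]
  have hVM : V * M = vecMulVec (eR n) (eL n - eR n) := by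
    rw [hV, vecMulVec_mul', hMTeL]
  have hVMW : V * vecMulVec (eL n - eR n) (eR n) = vecMulVec (eR n) (eR n) := by
    rw [hV, vecMulVec_mul_vecMulVec', hdL']
    have : (eL n - eR n) 0 = 1 := by simp [eL, eR, hne]
    rw [this, one_smul]
  have expand2 : (1 + V) * M * (1 + W) = M + M * W + V * M + V * (M * W) := by
    noncomm_ring
  have final : M + vecMulVec (eL n - eR n) (eR n) + vecMulVec (eR n) (eL n - eR n)
      + vecMulVec (eR n) (eR n)
      = pad n (centralBlock n A) + vecMulVec (eL n) (eL n) := by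
    rw [hM]
    ext i j
    simp only [Matrix.add_apply, vecMulVec_apply, Pi.sub_apply]
    by_cases hi0 : i.1 = 0 <;> by_cases hj0 : j.1 = 0 <;>
      simp [eL, eR, hi0, hj0, hne, hnz] <;> ring
  have step2 : (1 + V) * M * (1 + V)ᵀ
      = pad n (centralBlock n A) + vecMulVec (eL n) (eL n) := by
    rw [hVT, expand2, hMW, hVM, hVMW]
    exact final
  -- assemble the rank chain
  have r1 : ((1 + L) * A * (1 + L)ᵀ).rank = A.rank := by
    rw [Matrix.rank_mul_eq_left_of_isUnit_det ((1 + L)ᵀ) ((1 + L) * A) hdetET,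
      Matrix.rank_mul_eq_right_of_isUnit_det (1 + L) A hdetE]
  have r2 : ((1 + V) * M * (1 + V)ᵀ).rank = M.rank := by
    rw [Matrix.rank_mul_eq_left_of_isUnit_det ((1 + V)ᵀ) ((1 + V) * M) hdetVT,
      Matrix.rank_mul_eq_right_of_isUnit_det (1 + V) M hdetV]
  have hAr : A.rank = (pad n (centralBlock n A) + vecMulVec (eL n) (eL n)).rank := by
    calc A.rank = ((1 + L) * A * (1 + L)ᵀ).rank := r1.symm
      _ = M.rank := by rw [step1]
      _ = ((1 + V) * M * (1 + V)ᵀ).rank := r2.symm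
      _ = _ := by rw [step2]
  rw [hAr, ← Matrix.rank_submatrix (pad n (centralBlock n A) + vecMulVec (eL n) (eL n))
    (borderEquiv n hn) (borderEquiv n hn), reindexM n hn, rank_fromBlocks_diag, rank_diag_two]
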